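/- Let k be an algebraically closed field whose characteristic is neither 2 nor 3, and let α in k satisfy α^2 + 11α - 1 = 0. Then the homogeneous cubic F = (Y^2 - Z^2)(X + Y) + α(X^2 - Z^2)(Y - X) is irreducible in k[X,Y,Z]. -/

import Mathlib

set_option maxHeartbeats 1000000


open MvPolynomial

/-- The pencil of cubics `G_{s,t} = s(Y² - Z²)(X + Y) + t(X² - Z²)(Y - X)` in `k[X,Y,Z]`,
with variables `X 0 = X`, `X 1 = Y`, `X 2 = Z`. -/
noncomputable def Gpencil (k : Type*) [CommRing k] (s t : k) : MvPolynomial (Fin 3) k :=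
  C s * ((X 1) ^ 2 - (X 2) ^ 2) * (X 0 + X 1) + C t * ((X 0) ^ 2 - (X 2) ^ 2) * (X 1 - X 0)

namespace Stmt6Aux

variable {k : Type*} [CommRing k]

/-- `A = -((1+α)u + (1-α)v)`, the top coefficient of `G` as a polynomial in `Z`
(after moving `Z` to the first position). -/
noncomputable def Apoly (k : Type*) [CommRing k] (α : k) : MvPolynomial (Fin 2) k :=
  -(C (1 + α) * X 0 + C (1 - α) * X 1)

/-- `B = u²(u+v) + αv²(u-v)`, the constant coefficient. -/
noncomputable def Bpoly (k : Type*) [CommRing k] (α : k) : MvPolynomial (Fin 2) k :=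
  (X 0) ^ 2 * (X 0 + X 1) + C α * (X 1) ^ 2 * (X 0 - X 1)

/-- Evaluation along the parametrized line `u = (1-α) + t`, `v = -(1+α) + t`. -/
noncomputable def phi (k : Type*) [CommRing k] (α : k) :
    MvPolynomial (Fin 2) k →ₐ[k] Polynomial k :=
  aeval ![Polynomial.C (1 - α) + Polynomial.X, Polynomial.C (-(1 + α)) + Polynomial.X]

lemma key_eq (α : k) :
    (MvPolynomial.finSuccEquiv k 2) (rename (Equiv.swap (0 : Fin 3) 2) (Gpencil k 1 α)) =
      Polynomial.C (Apoly k α) * Polynomial.X ^ 2 + Polynomial.C (Bpoly k α) := by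
  have s0 : Equiv.swap (0 : Fin 3) 2 0 = 2 := Equiv.swap_apply_left _ _
  have s1 : Equiv.swap (0 : Fin 3) 2 1 = 1 := Equiv.swap_apply_of_ne_of_ne (by decide) (by decide)
  have s2 : Equiv.swap (0 : Fin 3) 2 2 = 0 := Equiv.swap_apply_right _ _
  have e1 : (X (1 : Fin 3) : MvPolynomial (Fin 3) k) = X (Fin.succ 0) := rfl
  have e2 : (X (2 : Fin 3) : MvPolynomial (Fin 3) k) = X (Fin.succ 1) := rfl
  have hC : ∀ a : k, (MvPolynomial.finSuccEquiv k 2) (C a) = Polynomial.C (C a) := by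
    intro a
    simpa using (MvPolynomial.finSuccEquiv k 2).commutes a
  simp only [Gpencil, Apoly, Bpoly, map_add, map_sub, map_mul, map_pow, map_neg, map_one,
    rename_X, rename_C, s0, s1, s2, hC]
  simp only [e1, e2, finSuccEquiv_X_zero, finSuccEquiv_X_succ]
  ring

lemma phi_A (α : k) : phi k α (Apoly k α) = Polynomial.C (-2) * Polynomial.X := by
  simp only [phi, Apoly, map_add, map_mul, map_sub, map_neg, map_one, aeval_X, aeval_C,
    Matrix.cons_val_zero, Matrix.cons_val_one, Matrix.head_cons, Polynomial.algebraMap_eq,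
    Polynomial.C_add, Polynomial.C_sub, Polynomial.C_neg, Polynomial.C_1, map_ofNat]
  ring

lemma eval_phi_B (α : k) : Polynomial.eval 0 (phi k α (Bpoly k α)) = 8 * α ^ 2 := by
  simp only [phi, Bpoly, map_add, map_mul, map_sub, map_neg, map_one, map_pow, aeval_X, aeval_C,
    Matrix.cons_val_zero, Matrix.cons_val_one, Matrix.head_cons, Polynomial.algebraMap_eq,
    Polynomial.eval_add, Polynomial.eval_mul, Polynomial.eval_sub, Polynomial.eval_pow,
    Polynomial.eval_C, Polynomial.eval_X, Polynomial.eval_neg, Polynomial.eval_one]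
  ring

variable {k : Type*} [Field k]

lemma prime_X0 : Prime (X 0 : MvPolynomial (Fin 2) k) := by
  rw [← MulEquiv.prime_iff (MvPolynomial.finSuccEquiv k 1).toMulEquiv]
  have : (MvPolynomial.finSuccEquiv k 1) (X 0) = Polynomial.X := finSuccEquiv_X_zero
  rw [show ((MvPolynomial.finSuccEquiv k 1).toMulEquiv (X 0)) = Polynomial.X from this]
  exact Polynomial.prime_X

lemma prime_Apoly (α : k) (h2 : (2 : k) ≠ 0) : Prime (Apoly k α) := by
  have hh : (C (2:k)⁻¹ : MvPolynomial (Fin 2) k) * 2 = 1 := by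
    rw [show ((2 : MvPolynomial (Fin 2) k)) = C 2 from (map_ofNat C 2).symm, ← C_mul,
      inv_mul_cancel₀ h2, C_1]
  let f : MvPolynomial (Fin 2) k →ₐ[k] MvPolynomial (Fin 2) k :=
    aeval ![-(C (1 + α) * X 0 + C (1 - α) * X 1), -X 0 + X 1]
  let g : MvPolynomial (Fin 2) k →ₐ[k] MvPolynomial (Fin 2) k :=
    aeval ![C (-(2:k)⁻¹) * X 0 + C (-((1-α)) * (2:k)⁻¹) * X 1,
            C (-(2:k)⁻¹) * X 0 + C ((1+α) * (2:k)⁻¹) * X 1]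
  have hfg : f.comp g = AlgHom.id k _ := by
    apply MvPolynomial.algHom_ext
    intro i
    fin_cases i
    · simp only [AlgHom.coe_comp, Function.comp_apply, AlgHom.coe_id, id_eq, f, g,
        Matrix.cons_val_zero, Matrix.cons_val_one, Matrix.head_cons,
        map_add, map_mul, map_sub, map_neg, map_one, C_1, aeval_X, aeval_C, Fin.mk_zero,
        Fin.mk_one, MvPolynomial.algebraMap_eq]
      linear_combination (X 0 : MvPolynomial (Fin 2) k) * hh
    · simp only [AlgHom.coe_comp, Function.comp_apply, AlgHom.coe_id, id_eq, f, g,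
        Matrix.cons_val_zero, Matrix.cons_val_one, Matrix.head_cons,
        map_add, map_mul, map_sub, map_neg, map_one, C_1, aeval_X, aeval_C, Fin.mk_zero,
        Fin.mk_one, MvPolynomial.algebraMap_eq]
      linear_combination (X 1 : MvPolynomial (Fin 2) k) * hh
  have hgf : g.comp f = AlgHom.id k _ := by
    apply MvPolynomial.algHom_ext
    intro i
    fin_cases i
    · simp only [AlgHom.coe_comp, Function.comp_apply, AlgHom.coe_id, id_eq, f, g,
        Matrix.cons_val_zero, Matrix.cons_val_one, Matrix.head_cons,
        map_add, map_mul, map_sub, map_neg, map_one, C_1, aeval_X, aeval_C, Fin.mk_zero,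
        Fin.mk_one, MvPolynomial.algebraMap_eq]
      linear_combination (X 0 : MvPolynomial (Fin 2) k) * hh
    · simp only [AlgHom.coe_comp, Function.comp_apply, AlgHom.coe_id, id_eq, f, g,
        Matrix.cons_val_zero, Matrix.cons_val_one, Matrix.head_cons,
        map_add, map_mul, map_sub, map_neg, map_one, C_1, aeval_X, aeval_C, Fin.mk_zero,
        Fin.mk_one, MvPolynomial.algebraMap_eq]
      linear_combination (X 1 : MvPolynomial (Fin 2) k) * hh
  let e : MvPolynomial (Fin 2) k ≃ₐ[k] MvPolynomial (Fin 2) k := AlgEquiv.ofAlgHom f g hfg hgf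
  have hA : e (X 0) = Apoly k α := by
    simp [e, f, Apoly, AlgEquiv.ofAlgHom]
  have := (MulEquiv.prime_iff e.toMulEquiv).mpr (prime_X0 (k := k))
  rwa [show e.toMulEquiv (X 0) = e (X 0) from rfl, hA] at this

end Stmt6Aux

open Stmt6Aux

/-- Let `k` be an algebraically closed field of characteristic neither 2 nor 3, and let
`α ∈ k` satisfy `α² + 11α - 1 = 0`. Then the homogeneous cubic
`F = (Y² - Z²)(X + Y) + α(X² - Z²)(Y - X)` is irreducible in `k[X,Y,Z]`. -/
theorem stmt_6 (k : Type*) [Field k] [IsAlgClosed k]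
    (h2 : ringChar k ≠ 2) (h3 : ringChar k ≠ 3)
    (α : k) (hα : α ^ 2 + 11 * α - 1 = 0) :
    Irreducible (Gpencil k 1 α) := by
  classical
  -- numeric facts
  have h2k : (2 : k) ≠ 0 := by
    intro h
    have hdvd : ringChar k ∣ 2 := ringChar.dvd (by exact_mod_cast h)
    rcases (Nat.dvd_prime Nat.prime_two).mp hdvd with h1 | h1
    · exact CharP.ringChar_ne_one h1
    · exact h2 h1
  have hα0 : α ≠ 0 := by
    rintro rfl
    norm_num at hα
  -- instances on R = k[u,v]
  letI : NormalizationMonoid (MvPolynomial (Fin 2) k) :=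
    StrongNormalizationMonoid.toNormalizationMonoid (self := UniqueFactorizationMonoid.normalizationMonoid)
  letI : NormalizedGCDMonoid (MvPolynomial (Fin 2) k) :=
    UniqueFactorizationMonoid.toNormalizedGCDMonoid _
  letI : IsIntegrallyClosed (MvPolynomial (Fin 2) k) := GCDMonoid.toIsIntegrallyClosed
  set A := Apoly k α with hAdef
  set B := Bpoly k α with hBdef
  have hprimeA : Prime A := prime_Apoly α h2k
  have hA0 : A ≠ 0 := hprimeA.ne_zero
  -- B is nonzero along phi at 0
  have hφB : Polynomial.eval 0 (phi k α B) = 8 * α ^ 2 := eval_phi_B α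
  have h8 : (8 : k) * α ^ 2 ≠ 0 := by
    have : (8 : k) = 2 ^ 3 := by norm_num
    exact mul_ne_zero (this ▸ pow_ne_zero 3 h2k) (pow_ne_zero 2 hα0)
  have hnotdvd : ¬ A ∣ B := by
    rintro ⟨w, hw⟩
    apply h8
    rw [← hφB, hw, map_mul, phi_A α, Polynomial.eval_mul, Polynomial.eval_mul,
      Polynomial.eval_X]
    ring
  -- reduce to the polynomial `p = C A * X² + C B` over `k[u,v]`
  set p : Polynomial (MvPolynomial (Fin 2) k) :=
    Polynomial.C A * Polynomial.X ^ 2 + Polynomial.C B with hp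
  refine (MulEquiv.irreducible_iff (AlgEquiv.toMulEquiv
    ((renameEquiv k (Equiv.swap (0 : Fin 3) 2)).trans (MvPolynomial.finSuccEquiv k 2)))).mp ?_
  have hEp : (AlgEquiv.toMulEquiv
      ((renameEquiv k (Equiv.swap (0 : Fin 3) 2)).trans (MvPolynomial.finSuccEquiv k 2)))
      (Gpencil k 1 α) = p := by
    have := key_eq (k := k) α
    simpa [AlgEquiv.trans_apply, renameEquiv_apply] using this
  rw [hEp]
  -- primitivity of p
  have hprim : p.IsPrimitive := by
    intro r hr
    have hc := (Polynomial.C_dvd_iff_dvd_coeff r p).mp hr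
    have hrA : r ∣ A := by
      have := hc 2
      simpa [hp, Polynomial.coeff_C_mul, Polynomial.coeff_X_pow, Polynomial.coeff_C] using this
    have hrB : r ∣ B := by
      have := hc 0
      simpa [hp, Polynomial.coeff_C_mul, Polynomial.coeff_X_pow, Polynomial.coeff_C] using this
    obtain ⟨c, hcc⟩ := hrA
    rcases hprimeA.irreducible.isUnit_or_isUnit hcc with hu | hu
    · exact hu
    · exfalso
      have hAr : Associated A r := hcc ▸ associated_mul_unit_left r c hu
      exact hnotdvd (hAr.dvd.trans hrB)
  -- Gauss's lemma: reduce to the fraction field K = k(u,v)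
  rw [hprim.irreducible_iff_irreducible_map_fraction_map
    (K := FractionRing (MvPolynomial (Fin 2) k))]
  set K := FractionRing (MvPolynomial (Fin 2) k)
  set ι := algebraMap (MvPolynomial (Fin 2) k) K with hι
  have hinj : Function.Injective ι := IsFractionRing.injective _ _
  have ha0 : ι A ≠ 0 := fun h => hA0 (hinj (by simpa using h))
  have hcval : (ι A) * (-(ι B * (ι A)⁻¹)) = -(ι B) := by
    rw [mul_neg, mul_comm (ι B), ← mul_assoc, mul_inv_cancel₀ ha0, one_mul]
  have hmap : p.map ι =
      Polynomial.C (ι A) * (Polynomial.X ^ 2 - Polynomial.C (-(ι B * (ι A)⁻¹))) := by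
    rw [hp, Polynomial.map_add, Polynomial.map_mul, Polynomial.map_pow, Polynomial.map_C,
      Polynomial.map_C, Polynomial.map_X]
    rw [mul_sub, ← Polynomial.C_mul, hcval, Polynomial.C_neg, sub_neg_eq_add]
  rw [hmap]
  -- the quadratic has no root in K
  have hmon : Irreducible (Polynomial.X ^ 2 - Polynomial.C (-(ι B * (ι A)⁻¹)) : Polynomial K) := by
    apply X_pow_sub_C_irreducible_of_prime Nat.prime_two
    intro s hs
    have h1 : (s * ι A) ^ 2 = ι (-(A * B)) := by
      have hss : (s * ι A) ^ 2 = s ^ 2 * ((ι A) * (ι A)) := by ring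
      rw [hss, hs, map_neg, map_mul]
      rw [show -(ι B * (ι A)⁻¹) * (ι A * ι A) = -(ι B * (ι A * (ι A)⁻¹) * ι A) by ring,
        mul_inv_cancel₀ ha0]
      ring
    obtain ⟨S, hS⟩ := IsIntegrallyClosed.exists_algebraMap_eq_of_isIntegral_pow
      (R := MvPolynomial (Fin 2) k) (x := s * ι A) (n := 2) (by norm_num)
      (h1 ▸ isIntegral_algebraMap)
    have hS2 : S ^ 2 = -(A * B) := by
      apply hinj
      rw [map_pow, hS, h1]
    -- push through phi and look at the order of vanishing at 0
    have hphiS : (phi k α S) ^ 2 = Polynomial.X * (Polynomial.C 2 * phi k α B) := by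
      have := congrArg (phi k α) hS2
      rw [map_pow, map_neg, map_mul, phi_A α, Polynomial.C_neg] at this
      rw [this]
      ring
    have hXdvd : Polynomial.X ∣ phi k α S := by
      have hdd : Polynomial.X ∣ phi k α S * phi k α S := by
        rw [← sq, hphiS]
        exact Dvd.intro _ rfl
      rcases Polynomial.prime_X.2.2 _ _ hdd with h | h <;> exact h
    obtain ⟨w, hw⟩ := hXdvd
    have hXw : Polynomial.X * (Polynomial.X * w ^ 2) =
        Polynomial.X * (Polynomial.C 2 * phi k α B) := by
      rw [← hphiS, hw]
      ring
    have hcancel := mul_left_cancel₀ Polynomial.X_ne_zero hXw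
    have heval := congrArg (Polynomial.eval 0) hcancel
    rw [Polynomial.eval_mul, Polynomial.eval_mul, Polynomial.eval_X, Polynomial.eval_C,
      hφB, zero_mul] at heval
    apply h8
    have h16 : (2 : k) * (8 * α ^ 2) = 0 := heval.symm
    rcases mul_eq_zero.mp h16 with h | h
    · exact absurd h h2k
    · exact h
  exact (Associated.irreducible
    (associated_unit_mul_left _ _ (Polynomial.isUnit_C.mpr (isUnit_iff_ne_zero.mpr ha0))).symm
    hmon)
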